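/- Let K ≥ 1 and T ≥ max(K, 2) be natural numbers. For each arm i ∈ {1, …, K}, let (X_{i,s})_{s=1}^{T} be [0,1]-valued random variables such that the whole family {X_{i,s}} is independent and, for each fixed i, the X_{i,s} are identically distributed with mean μ_i. Set μ* = max_i μ_i and Δ_i = μ* − μ_i. Define the UCB policy: in rounds t = 1, …, K play arm A_t = t; for t > K play A_t = argmax_i ( μ̂_i(t−1) + √(2 log T / N_i(t−1)) ), where N_i(t−1) is the number of rounds s ≤ t−1 with A_s = i, the reward received when arm i is pulled for the j-th time is X_{i,j}, and μ̂_i(t−1) is the empirical mean of the rewards of arm i over its first N_i(t−1) pulls. Then with probability at least 1 − 2 K T^{−3}, the realized regret satisfies Σ_{t=1}^{T} (μ* − μ_{A_t}) ≤ Σ_{i : Δ_i > 0} ( 8 log T / Δ_i + Δ_i ). -/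

import Mathlib

open MeasureTheory ProbabilityTheory Finset

section UCBAux

open Real

variable {Ω : Type*} [MeasurableSpace Ω] {P : Measure Ω} [IsProbabilityMeasure P]

set_option linter.unusedSectionVars false
set_option linter.unusedVariables false

lemma hoeffding_core {p t : ℝ} (hp0 : 0 ≤ p) (hp1 : p ≤ 1) (ht : 0 ≤ t) :
    Real.log (1 - p + p * Real.exp t) ≤ p * t + t ^ 2 / 8 := by
  set D : ℝ → ℝ := fun t => 1 - p + p * Real.exp t with hDdef
  have hD : ∀ s : ℝ, 0 < D s := by
    intro s
    rcases hp0.eq_or_lt with h | h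
    · simp [hDdef, ← h]
    · exact add_pos_of_nonneg_of_pos (by linarith) (mul_pos h (exp_pos s))
  set F : ℝ → ℝ := fun s => p * s + s ^ 2 / 8 - Real.log (D s) with hFdef
  set F' : ℝ → ℝ := fun s => p + s / 4 - p * Real.exp s / D s with hF'def
  have hDder : ∀ s : ℝ, HasDerivAt D (p * Real.exp s) s := fun s =>
    ((Real.hasDerivAt_exp s).const_mul p).const_add (1 - p)
  have hFder : ∀ s : ℝ, HasDerivAt F (F' s) s := by
    intro s
    have h1 : HasDerivAt (fun s : ℝ => p * s) p s := by
      simpa using (hasDerivAt_id s).const_mul p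
    have h2 : HasDerivAt (fun s : ℝ => s ^ 2 / 8) (s / 4) s := by
      have := (hasDerivAt_pow 2 s).div_const 8
      refine this.congr_deriv ?_
      push_cast; ring
    have h3 : HasDerivAt (fun s => Real.log (D s)) (p * Real.exp s / D s) s :=
      (hDder s).log (hD s).ne'
    exact (h1.add h2).sub h3
  have hF'der : ∀ s : ℝ, HasDerivAt F'
      (1 / 4 - (p * Real.exp s * D s - p * Real.exp s * (p * Real.exp s)) / D s ^ 2) s := by
    intro s
    have h1 : HasDerivAt (fun s : ℝ => p + s / 4) (1 / 4) s := by
      simpa using ((hasDerivAt_id s).div_const 4).const_add p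
    have h2 : HasDerivAt (fun s => p * Real.exp s / D s)
        ((p * Real.exp s * D s - p * Real.exp s * (p * Real.exp s)) / D s ^ 2) s :=
      ((Real.hasDerivAt_exp s).const_mul p).div (hDder s) (hD s).ne'
    exact h1.sub h2
  have hF''nonneg : ∀ s : ℝ,
      0 ≤ 1 / 4 - (p * Real.exp s * D s - p * Real.exp s * (p * Real.exp s)) / D s ^ 2 := by
    intro s
    rw [sub_nonneg, div_le_iff₀ (pow_pos (hD s) 2)]
    have hDs : D s = 1 - p + p * Real.exp s := rfl
    nlinarith [sq_nonneg ((1 - p) - p * Real.exp s), exp_pos s]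
  have hF'mono : Monotone F' := by
    apply monotone_of_deriv_nonneg
    · exact fun s => (hF'der s).differentiableAt
    · intro s
      rw [(hF'der s).deriv]
      exact hF''nonneg s
  have hF'0 : F' 0 = 0 := by
    have : D 0 = 1 := by simp [hDdef]
    simp [hF'def, this]
  have hF'nonneg : ∀ s, 0 ≤ s → 0 ≤ F' s := fun s hs => hF'0 ▸ hF'mono hs
  have hFmono : MonotoneOn F (Set.Ici (0 : ℝ)) := by
    apply monotoneOn_of_deriv_nonneg (convex_Ici 0)
    · exact (fun s _ => ((hFder s).differentiableAt).continuousAt.continuousWithinAt)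
    · exact fun s _ => ((hFder s).differentiableAt).differentiableWithinAt
    · intro s hs
      rw [interior_Ici] at hs
      rw [(hFder s).deriv]
      exact hF'nonneg s (le_of_lt hs)
  have hF0 : F 0 = 0 := by simp [hFdef, hDdef]
  have := hFmono (Set.self_mem_Ici) (Set.mem_Ici.2 ht) ht
  rw [hF0] at this
  simp only [hFdef] at this
  linarith

lemma integ_bdd {f : Ω → ℝ} {C : ℝ} (hm : Measurable f) (hb : ∀ ω, ‖f ω‖ ≤ C) :
    Integrable f P :=
  (integrable_const C).mono' hm.aestronglyMeasurable (Filter.Eventually.of_forall hb)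


lemma mgf_le_of_mem_Icc {Y : Ω → ℝ} (hm : Measurable Y) (hb : ∀ ω, Y ω ∈ Set.Icc (0:ℝ) 1)
    {t : ℝ} (ht : 0 ≤ t) :
    mgf Y P t ≤ Real.exp (t * (∫ ω, Y ω ∂P) + t ^ 2 / 8) := by
  set m := ∫ ω, Y ω ∂P with hm_def
  have hYint : Integrable Y P :=
    integ_bdd hm (fun ω => by
      rw [Real.norm_eq_abs, abs_le]
      exact ⟨by linarith [(hb ω).1], (hb ω).2⟩)
  have hm0 : 0 ≤ m := integral_nonneg fun ω => (hb ω).1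
  have hm1 : m ≤ 1 := by
    calc m ≤ ∫ _ω, (1:ℝ) ∂P := integral_mono hYint (integrable_const 1) fun ω => (hb ω).2
    _ = 1 := by simp
  have hpt : ∀ ω, Real.exp (t * Y ω) ≤ 1 - Y ω + Y ω * Real.exp t := by
    intro ω
    have hcvx := convexOn_exp.2 (Set.mem_univ (0:ℝ)) (Set.mem_univ t)
      (by linarith [(hb ω).2] : (0:ℝ) ≤ 1 - Y ω) (hb ω).1 (by ring)
    simp only [smul_eq_mul, mul_zero, zero_add, Real.exp_zero, mul_one] at hcvx
    calc Real.exp (t * Y ω) = Real.exp (Y ω * t) := by rw [mul_comm]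
    _ ≤ (1 - Y ω) * 1 + Y ω * Real.exp t := by simpa using hcvx
    _ = 1 - Y ω + Y ω * Real.exp t := by ring
  have hint1 : Integrable (fun ω => Real.exp (t * Y ω)) P := by
    apply integ_bdd ((hm.const_mul t).exp)
    intro ω
    rw [Real.norm_eq_abs, abs_of_pos (Real.exp_pos _), Real.exp_le_exp]
    exact mul_le_of_le_one_right ht (hb ω).2
  have hstep : mgf Y P t ≤ 1 - m + m * Real.exp t := by
    rw [mgf]
    calc ∫ ω, Real.exp (t * Y ω) ∂P ≤ ∫ ω, (1 - Y ω + Y ω * Real.exp t) ∂P := by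
          apply integral_mono hint1 _ hpt
          exact ((integrable_const 1).sub hYint).add (hYint.mul_const _)
    _ = 1 - m + m * Real.exp t := by
          have h1 : Integrable (fun ω => 1 - Y ω) P := (integrable_const 1).sub hYint
          rw [integral_add h1 (hYint.mul_const _), integral_sub (integrable_const 1) hYint,
            integral_mul_const]
          simp [hm_def]
  have hpos : (0:ℝ) < 1 - m + m * Real.exp t := by
    rcases hm0.eq_or_lt with h | h
    · simp [← h]
    · have := Real.exp_pos t; nlinarith
  calc mgf Y P t ≤ 1 - m + m * Real.exp t := hstep
  _ = Real.exp (Real.log (1 - m + m * Real.exp t)) := (Real.exp_log hpos).symm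
  _ ≤ Real.exp (m * t + t ^ 2 / 8) := Real.exp_le_exp.2 (hoeffding_core hm0 hm1 ht)
  _ = Real.exp (t * m + t ^ 2 / 8) := by rw [mul_comm m t]

lemma chernoff {ι : Type*} (Y : ι → Ω → ℝ)
    (hindep : iIndepFun Y P) (hmeas : ∀ i, Measurable (Y i))
    (s : Finset ι) (hbdd : ∀ i ∈ s, ∀ ω, Y i ω ∈ Set.Icc (0:ℝ) 1)
    {ε : ℝ} (hε : 0 < ε) :
    P {ω | (∑ i ∈ s, ∫ ω', Y i ω' ∂P) + s.card * ε ≤ ∑ i ∈ s, Y i ω} ≤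
      ENNReal.ofReal (Real.exp (-2 * s.card * ε ^ 2)) := by
  classical
  set t : ℝ := 4 * ε with ht_def
  have ht : 0 ≤ t := by positivity
  set M : ℝ := ∑ i ∈ s, ∫ ω', Y i ω' ∂P with hM_def
  have hint : ∀ i ∈ s, Integrable (fun ω => Real.exp (t * Y i ω)) P := by
    intro i hi
    apply integ_bdd ((hmeas i).const_mul t).exp
    intro ω
    rw [Real.norm_eq_abs, abs_of_pos (Real.exp_pos _), Real.exp_le_exp]
    exact mul_le_of_le_one_right ht (hbdd i hi ω).2
  have hSint : Integrable (fun ω => Real.exp (t * (∑ i ∈ s, Y i) ω)) P :=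
    hindep.integrable_exp_mul_sum hmeas hint
  have hmgf : mgf (∑ i ∈ s, Y i) P t ≤ Real.exp (t * M + s.card * (t ^ 2 / 8)) := by
    rw [hindep.mgf_sum hmeas s]
    calc ∏ i ∈ s, mgf (Y i) P t
        ≤ ∏ i ∈ s, Real.exp (t * (∫ ω', Y i ω' ∂P) + t ^ 2 / 8) :=
          Finset.prod_le_prod (fun i _ => mgf_nonneg)
            (fun i hi => mgf_le_of_mem_Icc (hmeas i) (hbdd i hi) ht)
    _ = Real.exp (∑ i ∈ s, (t * (∫ ω', Y i ω' ∂P) + t ^ 2 / 8)) := (Real.exp_sum s _).symm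
    _ = Real.exp (t * M + s.card * (t ^ 2 / 8)) := by
          rw [Finset.sum_add_distrib, ← Finset.mul_sum, Finset.sum_const, nsmul_eq_mul]
  have hch := measure_ge_le_exp_mul_mgf (X := ∑ i ∈ s, Y i) (μ := P) (M + s.card * ε) ht hSint
  have hfin : (P {ω | M + s.card * ε ≤ (∑ i ∈ s, Y i) ω}).toReal ≤
      Real.exp (-2 * s.card * ε ^ 2) := by
    calc (P {ω | M + s.card * ε ≤ (∑ i ∈ s, Y i) ω}).toReal
        ≤ Real.exp (-t * (M + s.card * ε)) * mgf (∑ i ∈ s, Y i) P t := hch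
    _ ≤ Real.exp (-t * (M + s.card * ε)) * Real.exp (t * M + s.card * (t ^ 2 / 8)) := by
          exact mul_le_mul_of_nonneg_left hmgf (le_of_lt (Real.exp_pos _))
    _ = Real.exp (-t * (M + s.card * ε) + (t * M + s.card * (t ^ 2 / 8))) := (Real.exp_add _ _).symm
    _ = Real.exp (-2 * s.card * ε ^ 2) := by congr 1; rw [ht_def]; ring
  have hset : {ω | M + s.card * ε ≤ ∑ i ∈ s, Y i ω} =
      {ω | M + s.card * ε ≤ (∑ i ∈ s, Y i) ω} := by
    ext ω; simp [Finset.sum_apply]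
  rw [hset, ← ENNReal.ofReal_toReal (measure_ne_top P _)]
  exact ENNReal.ofReal_le_ofReal hfin

/-- Deterministic part of the UCB analysis: on the good event, the regret bound holds. -/
lemma ucb_det {Ω : Type*} (K T : ℕ) (hK : 1 ≤ K) (hKT : K ≤ T) (hT2 : 2 ≤ T)
    (X : Fin K → ℕ → Ω → ℝ) (μ : Fin K → ℝ) (μstar : ℝ)
    (hstar : IsGreatest (Set.range μ) μstar)
    (A : ℕ → Ω → Fin K) (N : Fin K → ℕ → Ω → ℕ)
    (hN : ∀ i t ω, N i t ω = ((Finset.range t).filter (fun s => A s ω = i)).card)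
    (muhat : Fin K → ℕ → Ω → ℝ)
    (hmuhat : ∀ i t ω, muhat i t ω = (∑ j ∈ Finset.range (N i t ω), X i j ω) / N i t ω)
    (hinit : ∀ (t : ℕ) (ω : Ω) (ht : t < K), A t ω = ⟨t, ht⟩)
    (hselect : ∀ t ω, K ≤ t → t < T → ∀ i : Fin K,
      muhat i t ω + Real.sqrt (2 * Real.log T / N i t ω) ≤
        muhat (A t ω) t ω + Real.sqrt (2 * Real.log T / N (A t ω) t ω))
    (ω : Ω)
    (hgood : ∀ i : Fin K, ∀ n : ℕ, 1 ≤ n → n ≤ T →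
      |(∑ j ∈ Finset.range n, X i j ω) - n * μ i| < n * Real.sqrt (2 * Real.log T / n)) :
    ∑ t ∈ Finset.range T, (μstar - μ (A t ω)) ≤
      ∑ i ∈ univ.filter (fun i : Fin K => 0 < μstar - μ i),
        (8 * Real.log T / (μstar - μ i) + (μstar - μ i)) := by
  classical
  have hlog : 0 < Real.log T :=
    Real.log_pos (by exact_mod_cast lt_of_lt_of_le one_lt_two hT2)
  set ε : ℕ → ℝ := fun n => Real.sqrt (2 * Real.log T / n) with hε_def
  have hΔ : ∀ i : Fin K, 0 ≤ μstar - μ i := fun i =>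
    sub_nonneg.2 (hstar.2 (Set.mem_range_self i))
  -- every arm has been pulled at least once after round K
  have hNpos : ∀ (i : Fin K) (t : ℕ), K ≤ t → 1 ≤ N i t ω := by
    intro i t ht
    rw [hN]
    refine Finset.card_pos.2 ⟨(i : ℕ), ?_⟩
    rw [mem_filter, mem_range]
    exact ⟨lt_of_lt_of_le i.isLt ht, by rw [hinit (i : ℕ) ω i.isLt]⟩
  have hNle : ∀ (i : Fin K) (t : ℕ), N i t ω ≤ t := by
    intro i t
    rw [hN]
    exact (Finset.card_filter_le _ _).trans_eq (Finset.card_range t)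
  -- accuracy of the empirical means
  have hacc : ∀ (j : Fin K) (t : ℕ), K ≤ t → t < T →
      |muhat j t ω - μ j| < ε (N j t ω) := by
    intro j t htK htT
    set n := N j t ω with hn_def
    have hn1 : 1 ≤ n := hNpos j t htK
    have hnT : n ≤ T := le_trans (hNle j t) (le_of_lt htT)
    have hnR : (0 : ℝ) < n := by exact_mod_cast hn1
    have := hgood j n hn1 hnT
    rw [hmuhat]
    rw [show (∑ k ∈ Finset.range (N j t ω), X j k ω) / (N j t ω : ℝ) - μ j
        = ((∑ k ∈ Finset.range n, X j k ω) - n * μ j) / n by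
      rw [← hn_def]; field_simp]
    rw [abs_div, abs_of_pos hnR, div_lt_iff₀ hnR]
    calc |(∑ k ∈ Finset.range n, X j k ω) - n * μ j| < n * ε n := this
    _ = ε n * n := mul_comm _ _
  -- the key pull-count bound for suboptimal arms
  obtain ⟨istar, histar⟩ := hstar.1
  have hkey : ∀ i : Fin K, 0 < μstar - μ i →
      (N i T ω : ℝ) ≤ 8 * Real.log T / (μstar - μ i) ^ 2 + 1 := by
    intro i hΔi
    by_cases hc : N i T ω ≤ 1
    · have h1 : (N i T ω : ℝ) ≤ 1 := by exact_mod_cast hc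
      have : (0:ℝ) ≤ 8 * Real.log T / (μstar - μ i) ^ 2 := by positivity
      linarith
    · push_neg at hc
      set F : Finset ℕ := (Finset.range T).filter (fun s => A s ω = i) with hF_def
      have hFcard : F.card = N i T ω := (hN i T ω).symm
      have hFne : F.Nonempty := Finset.card_pos.1 (by omega)
      set t := F.max' hFne with ht_def
      have htF : t ∈ F := F.max'_mem hFne
      have htT : t < T := by
        have := (Finset.mem_filter.1 htF).1; rwa [Finset.mem_range] at this
      have hAt : A t ω = i := (Finset.mem_filter.1 htF).2
      have htK : K ≤ t := by
        by_contra h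
        push_neg at h
        have hsub : F ⊆ {(i : ℕ)} := by
          intro s hs
          have hst : s ≤ t := F.le_max' s hs
          have hsK : s < K := lt_of_le_of_lt hst h
          have hAs : A s ω = i := (Finset.mem_filter.1 hs).2
          rw [hinit s ω hsK] at hAs
          have : s = (i : ℕ) := by
            have := congrArg Fin.val hAs; simpa using this
          simp [this]
        have := Finset.card_le_card hsub
        simp only [Finset.card_singleton] at this
        omega
      -- N i t ω = N i T ω - 1
      have hNt : N i t ω + 1 = N i T ω := by
        have herase : (Finset.range t).filter (fun s => A s ω = i) = F.erase t := by
          ext s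
          simp only [Finset.mem_filter, Finset.mem_range, Finset.mem_erase, hF_def]
          constructor
          · rintro ⟨hst, hAs⟩
            exact ⟨Nat.ne_of_lt hst, lt_trans hst htT, hAs⟩
          · rintro ⟨hne, hsT, hAs⟩
            refine ⟨lt_of_le_of_ne (F.le_max' s ?_) hne, hAs⟩
            rw [hF_def, Finset.mem_filter, Finset.mem_range]; exact ⟨hsT, hAs⟩
        rw [hN, herase, Finset.card_erase_of_mem htF, hFcard]
        omega
      set n := N i t ω with hn_def
      have hn1 : 1 ≤ n := hNpos i t htK
      have hnR : (0 : ℝ) < n := by exact_mod_cast hn1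
      -- use the selection rule at round t
      have hsel := hselect t ω htK htT istar
      rw [hAt] at hsel
      have h1 : μstar - ε (N istar t ω) < muhat istar t ω := by
        have := (abs_lt.1 (hacc istar t htK htT)).1
        rw [histar] at this; linarith
      have h2 : muhat i t ω < μ i + ε n := by
        have := (abs_lt.1 (hacc i t htK htT)).2
        linarith
      have hchain : μstar - μ i < 2 * ε n := by
        have hs1 : μstar < muhat istar t ω + ε (N istar t ω) := by linarith
        have hs2 : muhat istar t ω + ε (N istar t ω) ≤ muhat i t ω + ε n := hsel
        linarith
      -- square it
      have hεsq : (ε n) ^ 2 = 2 * Real.log T / n := Real.sq_sqrt (by positivity)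
      have hsq : (μstar - μ i) ^ 2 < 8 * Real.log T / n := by
        have := pow_lt_pow_left₀ hchain (hΔ i) (two_ne_zero)
        calc (μstar - μ i) ^ 2 < (2 * ε n) ^ 2 := this
        _ = 4 * (ε n) ^ 2 := by ring
        _ = 8 * Real.log T / n := by rw [hεsq]; ring
      have hnn : (n : ℝ) < 8 * Real.log T / (μstar - μ i) ^ 2 := by
        rw [lt_div_iff₀ (by positivity)]
        rw [div_eq_mul_inv] at hsq
        have := (lt_div_iff₀ hnR).1 (by rwa [div_eq_mul_inv])
        linarith [this]
      have hcast : (N i T ω : ℝ) = (n : ℝ) + 1 := by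
        rw [← hNt]; push_cast; ring
      rw [hcast]; linarith
  -- regret decomposition
  have hdecomp : ∑ t ∈ Finset.range T, (μstar - μ (A t ω))
      = ∑ i : Fin K, (N i T ω : ℝ) * (μstar - μ i) := by
    rw [← Finset.sum_fiberwise (Finset.range T) (fun t => A t ω)
      (fun t => μstar - μ (A t ω))]
    refine Finset.sum_congr rfl fun i _ => ?_
    have hinner : ∑ t ∈ (Finset.range T).filter (fun t => A t ω = i), (μstar - μ (A t ω))
        = ∑ t ∈ (Finset.range T).filter (fun t => A t ω = i), (μstar - μ i) :=
      Finset.sum_congr rfl fun t ht => by rw [(Finset.mem_filter.1 ht).2]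
    rw [hinner, Finset.sum_const, nsmul_eq_mul, hN]
  rw [hdecomp]
  rw [← Finset.sum_filter_add_sum_filter_not Finset.univ (fun i : Fin K => 0 < μstar - μ i)]
  have hzero : ∑ i ∈ univ.filter (fun i : Fin K => ¬ 0 < μstar - μ i),
      (N i T ω : ℝ) * (μstar - μ i) = 0 := by
    refine Finset.sum_eq_zero fun i hi => ?_
    rw [Finset.mem_filter] at hi
    have : μstar - μ i = 0 := le_antisymm (not_lt.1 hi.2) (hΔ i)
    rw [this, mul_zero]
  rw [hzero, add_zero]
  refine Finset.sum_le_sum fun i hi => ?_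
  rw [Finset.mem_filter] at hi
  have hΔi := hi.2
  have hne : μstar - μ i ≠ 0 := ne_of_gt hΔi
  calc (N i T ω : ℝ) * (μstar - μ i)
      ≤ (8 * Real.log T / (μstar - μ i) ^ 2 + 1) * (μstar - μ i) :=
        mul_le_mul_of_nonneg_right (hkey i hΔi) (hΔ i)
  _ = 8 * Real.log T / (μstar - μ i) + (μstar - μ i) := by
      field_simp

end UCBAux

/-- High-probability regret bound for the UCB policy.  There are `K` arms; the reward of the
`(j+1)`-st pull of arm `i` is `X i j`, where the family `{X i s : i < K, s < T}` is
independent, `[0,1]`-valued, and for each fixed `i` identically distributed with mean `μ i`.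
The policy `A` plays each arm once in the first `K` rounds (`A t = t` for `t < K`) and
afterwards maximizes the UCB index `μ̂ᵢ + √(2 log T / Nᵢ)`, where `Nᵢ` is the number of past
pulls of arm `i` and `μ̂ᵢ` the empirical mean of its past rewards.  Then with probability at
least `1 - 2 K T⁻³` the realized regret over `T` rounds is at most
`∑_{i : Δᵢ > 0} (8 log T / Δᵢ + Δᵢ)`, where `Δᵢ = μ⋆ - μᵢ` and `μ⋆ = maxᵢ μᵢ`. -/
theorem stmt_7 {Ω : Type*} [MeasurableSpace Ω] (P : Measure Ω) [IsProbabilityMeasure P]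
    (K T : ℕ) (hK : 1 ≤ K) (hT : max K 2 ≤ T)
    (X : Fin K → ℕ → Ω → ℝ) (μ : Fin K → ℝ) (μstar : ℝ)
    (hstar : IsGreatest (Set.range μ) μstar)
    (hmeas : ∀ i s, Measurable (X i s))
    (hbdd : ∀ i, ∀ s < T, ∀ ω, X i s ω ∈ Set.Icc (0 : ℝ) 1)
    (hindep : iIndepFun
      (fun p : Fin K × Fin T => X p.1 p.2) P)
    (hident : ∀ i, ∀ s < T, ∀ s' < T, IdentDistrib (X i s) (X i s') P P)
    (hmean : ∀ i, ∀ s < T, ∫ ω, X i s ω ∂P = μ i)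
    -- the policy: `A t ω` is the arm played in round `t` (rounds are `0, …, T-1`)
    (A : ℕ → Ω → Fin K)
    -- `N i t ω` is the number of pulls of arm `i` before round `t`
    (N : Fin K → ℕ → Ω → ℕ)
    (hN : ∀ i t ω, N i t ω = ((Finset.range t).filter (fun s => A s ω = i)).card)
    -- `muhat i t ω` is the empirical mean of the rewards of arm `i` before round `t`
    (muhat : Fin K → ℕ → Ω → ℝ)
    (hmuhat : ∀ i t ω, muhat i t ω = (∑ j ∈ Finset.range (N i t ω), X i j ω) / N i t ω)
    -- initialization: in the first `K` rounds each arm is played once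
    (hinit : ∀ (t : ℕ) (ω : Ω) (ht : t < K), A t ω = ⟨t, ht⟩)
    -- afterwards the policy maximizes the UCB index
    (hselect : ∀ t ω, K ≤ t → t < T → ∀ i : Fin K,
      muhat i t ω + Real.sqrt (2 * Real.log T / N i t ω) ≤
        muhat (A t ω) t ω + Real.sqrt (2 * Real.log T / N (A t ω) t ω)) :
    ENNReal.ofReal (1 - 2 * K * ((T : ℝ) ^ 3)⁻¹) ≤
      P {ω | ∑ t ∈ Finset.range T, (μstar - μ (A t ω)) ≤
        ∑ i ∈ univ.filter (fun i : Fin K => 0 < μstar - μ i),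
          (8 * Real.log T / (μstar - μ i) + (μstar - μ i))} := by
  classical
  have hKT : K ≤ T := le_trans (le_max_left _ _) hT
  have hT2 : 2 ≤ T := le_trans (le_max_right _ _) hT
  have hTR : (0:ℝ) < T := by
    have : (0:ℕ) < T := by omega
    exact_mod_cast this
  have hlog : 0 < Real.log T :=
    Real.log_pos (by exact_mod_cast lt_of_lt_of_le one_lt_two hT2)
  set δ : ℝ := Real.exp (-(4 * Real.log T)) with hδ_def
  have hδ_eq : δ = ((T:ℝ) ^ 4)⁻¹ := by
    rw [hδ_def, Real.exp_neg]
    congr 1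
    rw [show (4:ℝ) * Real.log T = Real.log ((T:ℝ) ^ 4) by
      rw [Real.log_pow]; push_cast; ring]
    exact Real.exp_log (by positivity)
  -- the bad events
  set up : Fin K → ℕ → Set Ω := fun i n =>
    {ω | (n:ℝ) * μ i + n * Real.sqrt (2 * Real.log T / n) ≤ ∑ j ∈ Finset.range n, X i j ω}
    with hup_def
  set dn : Fin K → ℕ → Set Ω := fun i n =>
    {ω | (n:ℝ) * (1 - μ i) + n * Real.sqrt (2 * Real.log T / n) ≤
      ∑ j ∈ Finset.range n, (1 - X i j ω)} with hdn_def
  set bad : Set Ω := ⋃ i : Fin K, ⋃ n ∈ Finset.Icc 1 T, (up i n ∪ dn i n) with hbad_def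
  have hup_meas : ∀ i n, MeasurableSet (up i n) := fun i n =>
    measurableSet_le measurable_const (Finset.measurable_sum _ fun j _ => hmeas i j)
  have hdn_meas : ∀ i n, MeasurableSet (dn i n) := fun i n =>
    measurableSet_le measurable_const
      (Finset.measurable_sum _ fun j _ => measurable_const.sub (hmeas i j))
  have hbad_meas : MeasurableSet bad :=
    MeasurableSet.iUnion fun i => MeasurableSet.biUnion (Finset.countable_toSet _)
      fun n _ => (hup_meas i n).union (hdn_meas i n)
  -- Chernoff bounds for the individual bad events
  have hXint : ∀ (i : Fin K) (j : ℕ), j < T → Integrable (X i j) P := by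
    intro i j hj
    refine integ_bdd (C := 1) (hmeas i j) fun ω => ?_
    have := hbdd i j hj ω
    rw [Real.norm_eq_abs, abs_le]
    exact ⟨by linarith [this.1], this.2⟩
  have hbound : ∀ (i : Fin K) (n : ℕ), 1 ≤ n → n ≤ T →
      P (up i n) ≤ ENNReal.ofReal δ ∧ P (dn i n) ≤ ENNReal.ofReal δ := by
    intro i n hn1 hnT
    have hnR : (0:ℝ) < n := by exact_mod_cast hn1
    set ε : ℝ := Real.sqrt (2 * Real.log T / n) with hεdef
    have hεpos : 0 < ε := Real.sqrt_pos.2 (div_pos (by linarith) hnR)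
    have hεsq : ε ^ 2 = 2 * Real.log T / n := Real.sq_sqrt (by positivity)
    -- the index set
    set emb : Fin n → Fin K × Fin T := fun j => (i, ⟨j.1, lt_of_lt_of_le j.2 hnT⟩)
      with hemb_def
    have hinj : Function.Injective emb := by
      intro a b hab
      have := congrArg (fun p : Fin K × Fin T => (p.2 : ℕ)) hab
      simpa [hemb_def, Fin.ext_iff] using this
    set s : Finset (Fin K × Fin T) := Finset.univ.image emb with hs_def
    have hcard : s.card = n := by
      rw [hs_def, Finset.card_image_of_injective _ hinj, Finset.card_univ, Fintype.card_fin]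
    have hsum_eq : ∀ (g : ℕ → Ω → ℝ) (ω : Ω),
        ∑ p ∈ s, g (p.2 : ℕ) ω = ∑ j ∈ Finset.range n, g j ω := by
      intro g ω
      rw [hs_def, Finset.sum_image (fun a _ b _ h => hinj h)]
      rw [← Fin.sum_univ_eq_sum_range (fun j => g j ω) n]
    have hexp : -2 * (s.card : ℝ) * ε ^ 2 = -(4 * Real.log T) := by
      rw [hcard, hεsq]
      field_simp
      ring
    have hsumX : ∀ (g : ℕ → Ω → ℝ) (ω : Ω),
        ∑ p ∈ s, g (p.2 : ℕ) ω = ∑ j ∈ Finset.range n, g j ω := hsum_eq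
    constructor
    · -- upper tail
      have hch := chernoff (P := P) (fun p : Fin K × Fin T => X p.1 p.2)
        hindep (fun p => hmeas p.1 p.2) s
        (fun (p : Fin K × Fin T) _ ω => hbdd p.1 p.2 p.2.isLt ω) hεpos
      have hmean_s : ∑ p ∈ s, ∫ ω', X p.1 (p.2 : ℕ) ω' ∂P = (n:ℝ) * μ i := by
        have h1 : ∀ p ∈ s, ∫ ω', X p.1 (p.2 : ℕ) ω' ∂P = μ i := by
          intro p hp
          obtain ⟨j, _, rfl⟩ := Finset.mem_image.1 hp
          exact hmean i _ ((j : Fin n).isLt.trans_le hnT)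
        rw [Finset.sum_congr rfl h1, Finset.sum_const, hcard, nsmul_eq_mul]
      have hsum2 : ∀ ω : Ω, ∑ p ∈ s, X p.1 (p.2 : ℕ) ω = ∑ j ∈ Finset.range n, X i j ω := by
        intro ω
        have h1 : ∀ p ∈ s, X p.1 (p.2 : ℕ) ω = X i (p.2 : ℕ) ω := by
          intro p hp
          obtain ⟨j, _, rfl⟩ := Finset.mem_image.1 hp
          rfl
        rw [Finset.sum_congr rfl h1]
        exact hsumX (fun j ω => X i j ω) ω
      have hset : {ω | (∑ p ∈ s, ∫ ω', X p.1 (p.2:ℕ) ω' ∂P) + (s.card : ℝ) * ε ≤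
          ∑ p ∈ s, X p.1 (p.2:ℕ) ω} = up i n := by
        ext ω
        rw [Set.mem_setOf_eq, hmean_s, hcard, hsum2 ω]
        rfl
      rw [hset, hexp] at hch
      exact hch
    · -- lower tail: apply Chernoff to 1 - X
      have hindep' : iIndepFun
          (fun p : Fin K × Fin T => (fun x : ℝ => 1 - x) ∘ (X p.1 p.2)) P :=
        hindep.comp (fun _ => fun x : ℝ => 1 - x)
          (fun _ => measurable_const.sub measurable_id)
      have hch := chernoff (P := P)
        (fun p : Fin K × Fin T => (fun x : ℝ => 1 - x) ∘ (X p.1 p.2))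
        hindep' (fun p => (show Measurable (fun x : ℝ => 1 - x) by fun_prop).comp (hmeas p.1 p.2)) s
        (fun (p : Fin K × Fin T) _ ω => by
          have h := hbdd p.1 p.2 p.2.isLt ω
          constructor
          · show (0:ℝ) ≤ 1 - X p.1 (p.2:ℕ) ω
            linarith [h.2]
          · show (1:ℝ) - X p.1 (p.2:ℕ) ω ≤ 1
            linarith [h.1]) hεpos
      have hmean_s : ∑ p ∈ s, ∫ ω', ((fun x : ℝ => 1 - x) ∘ (X p.1 p.2)) ω' ∂P
          = (n:ℝ) * (1 - μ i) := by
        have h1 : ∀ p ∈ s, ∫ ω', ((fun x : ℝ => 1 - x) ∘ (X p.1 p.2)) ω' ∂P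
            = 1 - μ i := by
          intro p hp
          have hshow : (fun ω' => ((fun x : ℝ => 1 - x) ∘ (X p.1 p.2)) ω')
              = fun ω' => 1 - X p.1 (p.2:ℕ) ω' := rfl
          rw [hshow, integral_sub (integrable_const 1) (hXint p.1 (p.2:ℕ) p.2.isLt)]
          obtain ⟨j, _, rfl⟩ := Finset.mem_image.1 hp
          rw [show (∫ ω', X ((emb j).1) (((emb j).2 : Fin T) : ℕ) ω' ∂P) = μ i from
            hmean i _ ((j : Fin n).isLt.trans_le hnT)]
          simp
        rw [Finset.sum_congr rfl h1, Finset.sum_const, hcard, nsmul_eq_mul]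
      have hsum2 : ∀ ω : Ω, ∑ p ∈ s, ((fun x : ℝ => 1 - x) ∘ (X p.1 p.2)) ω
          = ∑ j ∈ Finset.range n, (1 - X i j ω) := by
        intro ω
        have h1 : ∀ p ∈ s, ((fun x : ℝ => 1 - x) ∘ (X p.1 p.2)) ω
            = 1 - X i (p.2 : ℕ) ω := by
          intro p hp
          obtain ⟨j, _, rfl⟩ := Finset.mem_image.1 hp
          rfl
        rw [Finset.sum_congr rfl h1]
        exact hsumX (fun j ω => 1 - X i j ω) ω
      have hset : {ω | (∑ p ∈ s, ∫ ω', ((fun x : ℝ => 1 - x) ∘ (X p.1 p.2)) ω' ∂P)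
          + (s.card : ℝ) * ε ≤ ∑ p ∈ s, ((fun x : ℝ => 1 - x) ∘ (X p.1 p.2)) ω}
          = dn i n := by
        ext ω
        rw [Set.mem_setOf_eq, hmean_s, hcard, hsum2 ω]
        rfl
      rw [hset, hexp] at hch
      exact hch
  -- union bound
  have hPbad : P bad ≤ ENNReal.ofReal (2 * K * ((T:ℝ) ^ 3)⁻¹) := by
    have h1 : P bad ≤ ∑ i : Fin K, P (⋃ n ∈ Finset.Icc 1 T, (up i n ∪ dn i n)) :=
      measure_iUnion_fintype_le _ _
    have h2 : ∀ i : Fin K, P (⋃ n ∈ Finset.Icc 1 T, (up i n ∪ dn i n)) ≤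
        ∑ n ∈ Finset.Icc 1 T, (ENNReal.ofReal δ + ENNReal.ofReal δ) := by
      intro i
      refine le_trans (measure_biUnion_finset_le _ _) (Finset.sum_le_sum fun n hn => ?_)
      rw [Finset.mem_Icc] at hn
      obtain ⟨hu, hd⟩ := hbound i n hn.1 hn.2
      exact le_trans (measure_union_le _ _) (add_le_add hu hd)
    calc P bad ≤ ∑ i : Fin K, ∑ n ∈ Finset.Icc 1 T,
          (ENNReal.ofReal δ + ENNReal.ofReal δ) :=
        le_trans h1 (Finset.sum_le_sum fun i _ => h2 i)
    _ = ENNReal.ofReal (2 * K * ((T:ℝ) ^ 3)⁻¹) := by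
        rw [Finset.sum_const, Finset.sum_const, Finset.card_univ, Fintype.card_fin,
          Nat.card_Icc]
        simp only [Nat.add_sub_cancel, nsmul_eq_mul]
        rw [← ENNReal.ofReal_add (le_of_lt (Real.exp_pos _)) (le_of_lt (Real.exp_pos _))]
        rw [show ((T:ℕ) : ENNReal) = ENNReal.ofReal ((T:ℕ):ℝ) from
            (ENNReal.ofReal_natCast T).symm,
          show ((K:ℕ) : ENNReal) = ENNReal.ofReal ((K:ℕ):ℝ) from
            (ENNReal.ofReal_natCast K).symm,
          ← ENNReal.ofReal_mul (by positivity), ← ENNReal.ofReal_mul (by positivity)]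
        congr 1
        rw [← hδ_def, hδ_eq]
        field_simp
        ring
  -- the good event implies the regret bound
  have hsub : badᶜ ⊆ {ω | ∑ t ∈ Finset.range T, (μstar - μ (A t ω)) ≤
      ∑ i ∈ univ.filter (fun i : Fin K => 0 < μstar - μ i),
        (8 * Real.log T / (μstar - μ i) + (μstar - μ i))} := by
    intro ω hω
    simp only [hbad_def, Set.compl_iUnion, Set.mem_iInter, Set.mem_compl_iff,
      Set.mem_union, not_or] at hω
    have hgood : ∀ i : Fin K, ∀ n : ℕ, 1 ≤ n → n ≤ T →
        |(∑ j ∈ Finset.range n, X i j ω) - n * μ i| <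
          n * Real.sqrt (2 * Real.log T / n) := by
      intro i n hn1 hnT
      obtain ⟨hu, hd⟩ := hω i n (Finset.mem_Icc.2 ⟨hn1, hnT⟩)
      rw [hup_def] at hu
      rw [hdn_def] at hd
      simp only [Set.mem_setOf_eq, not_le] at hu hd
      have hsum1 : ∑ j ∈ Finset.range n, (1 - X i j ω)
          = (n : ℝ) - ∑ j ∈ Finset.range n, X i j ω := by
        rw [Finset.sum_sub_distrib, Finset.sum_const, Finset.card_range, nsmul_eq_mul,
          mul_one]
      rw [hsum1] at hd
      rw [abs_lt]
      constructor <;> nlinarith [hu, hd]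
    exact ucb_det K T hK hKT hT2 X μ μstar hstar A N hN muhat hmuhat hinit hselect ω hgood
  -- put everything together
  calc ENNReal.ofReal (1 - 2 * K * ((T:ℝ) ^ 3)⁻¹)
      = 1 - ENNReal.ofReal (2 * K * ((T:ℝ) ^ 3)⁻¹) := by
        rw [ENNReal.ofReal_sub _ (by positivity), ENNReal.ofReal_one]
  _ ≤ 1 - P bad := tsub_le_tsub_left hPbad 1
  _ = P badᶜ := (prob_compl_eq_one_sub hbad_meas).symm
  _ ≤ _ := measure_mono hsub
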